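/- The augmented complex of injective words C_*(m), where C_n(m) is the free abelian group on n-tuples of pairwise distinct elements of {1,...,m} with differential d(x_1,...,x_n) = Σ_{j=1}^n (-1)^{j+1}(x_1,...,x_{j-1},x_{j+1},...,x_n) and C_0(m) = ℤ, has vanishing homology in every degree n with 0 ≤ n < m. -/

import Mathlib

/-- The boundary map of the (augmented) complex of words: a word of length `n`
is sent to the alternating sum of its `n` subwords obtained by deleting one
letter; the empty word spans the augmentation copy of `ℤ` in degree `0`. -/
noncomputable def bdry (X : Type*) : (List X →₀ ℤ) →ₗ[ℤ] (List X →₀ ℤ) :=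
  Finsupp.lsum ℤ fun w => LinearMap.toSpanSingleton ℤ _
    (∑ k ∈ Finset.range w.length, ((-1 : ℤ) ^ k) • Finsupp.single (w.eraseIdx k) 1)

namespace FarmerAux

variable {X : Type*}

lemma bdry_single (w : List X) :
    bdry X (Finsupp.single w 1) =
      ∑ k ∈ Finset.range w.length, ((-1 : ℤ) ^ k) • Finsupp.single (w.eraseIdx k) 1 := by
  simp [bdry, Finsupp.lsum_single, LinearMap.toSpanSingleton_apply]

lemma eraseIdx_eraseIdx (w : List X) : ∀ (l k : ℕ), l ≤ k →
    (w.eraseIdx (k + 1)).eraseIdx l = (w.eraseIdx l).eraseIdx k := by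
  induction w with
  | nil => simp
  | cons x t ih =>
    intro l k h
    cases l with
    | zero => simp
    | succ l' =>
      cases k with
      | zero => omega
      | succ k' =>
        simp only [List.eraseIdx_cons_succ, List.eraseIdx_cons_zero]
        rw [ih l' k' (by omega)]

lemma bdry_bdry_single (w : List X) : bdry X (bdry X (Finsupp.single w 1)) = 0 := by
  rw [bdry_single, map_sum]
  simp only [map_smul, bdry_single]
  have hlen : ∀ k ∈ Finset.range w.length, (w.eraseIdx k).length = w.length - 1 := by
    intro k hk
    rw [List.length_eraseIdx]
    simp [Finset.mem_range.1 hk]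
  rw [Finset.sum_congr rfl (fun k hk => by rw [hlen k hk])]
  rw [Finset.sum_congr rfl (fun k _ => Finset.smul_sum)]
  simp only [smul_smul]
  rw [← Finset.sum_product']
  refine Finset.sum_involution
    (fun p _ => if p.2 < p.1 then (p.2, p.1 - 1) else (p.2 + 1, p.1)) ?_ ?_ ?_ ?_
  · rintro ⟨k, l⟩ hp
    simp only [Finset.mem_product, Finset.mem_range] at hp
    by_cases h : l < k
    · simp only [if_pos h]
      have hk1 : k = (k - 1) + 1 := by omega
      have hco : (w.eraseIdx k).eraseIdx l = (w.eraseIdx l).eraseIdx (k - 1) := by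
        conv_lhs => rw [hk1]
        exact eraseIdx_eraseIdx w l (k - 1) (by omega)
      rw [hco, ← add_smul]
      have hnegk : (-1 : ℤ) ^ k = -(-1 : ℤ) ^ (k - 1) := by
        conv_lhs => rw [hk1]
        rw [pow_succ]; ring
      have : (-1 : ℤ) ^ k * (-1) ^ l + (-1) ^ l * (-1) ^ (k - 1) = 0 := by
        rw [hnegk]; ring
      rw [this, zero_smul]
    · simp only [if_neg h]
      have hco : (w.eraseIdx (l + 1)).eraseIdx k = (w.eraseIdx k).eraseIdx l :=
        eraseIdx_eraseIdx w k l (by omega)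
      rw [hco, ← add_smul]
      have : (-1 : ℤ) ^ k * (-1) ^ l + (-1) ^ (l + 1) * (-1) ^ k = 0 := by
        rw [pow_succ]; ring
      rw [this, zero_smul]
  · rintro ⟨k, l⟩ hp _
    by_cases h : l < k <;> simp [h, Prod.ext_iff] <;> omega
  · rintro ⟨k, l⟩ hp
    simp only [Finset.mem_product, Finset.mem_range] at hp ⊢
    by_cases h : l < k <;> simp [h] <;> omega
  · rintro ⟨k, l⟩ hp
    by_cases h : l < k
    · simp only [if_pos h]
      have : ¬ (k - 1 < l) := by omega
      simp [this]; omega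
    · simp only [if_neg h]
      have : k < l + 1 := by omega
      simp [this]

lemma bdry_bdry (c : List X →₀ ℤ) : bdry X (bdry X c) = 0 := by
  induction c using Finsupp.induction_linear with
  | zero => simp
  | add f g hf hg => rw [map_add, map_add, hf, hg, add_zero]
  | single w b =>
    have : Finsupp.single w b = b • Finsupp.single w (1 : ℤ) := by
      simp [Finsupp.smul_single]
    rw [this, map_smul, map_smul, bdry_bdry_single, smul_zero]

variable [DecidableEq X]

/-- Prepend the letter `a` to words not containing it. -/
noncomputable def ins (a : X) : (List X →₀ ℤ) →ₗ[ℤ] (List X →₀ ℤ) :=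
  Finsupp.lsum ℤ fun w => LinearMap.toSpanSingleton ℤ _
    (if a ∈ w then 0 else Finsupp.single (a :: w) 1)

lemma ins_single (a : X) (w : List X) :
    ins a (Finsupp.single w 1) = if a ∈ w then 0 else Finsupp.single (a :: w) 1 := by
  simp [ins, Finsupp.lsum_single, LinearMap.toSpanSingleton_apply]

lemma homotopy_notmem (a : X) (w : List X) (ha : a ∉ w) :
    bdry X (ins a (Finsupp.single w 1)) + ins a (bdry X (Finsupp.single w 1))
      = Finsupp.single w 1 := by
  have hnot : ∀ k, a ∉ w.eraseIdx k := fun k h => ha ((w.eraseIdx_sublist k).mem h)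
  have h2 : ins a (bdry X (Finsupp.single w 1)) =
      ∑ k ∈ Finset.range w.length, ((-1 : ℤ) ^ k) • Finsupp.single (a :: w.eraseIdx k) 1 := by
    rw [bdry_single, map_sum]
    refine Finset.sum_congr rfl fun k _ => ?_
    rw [map_smul, ins_single, if_neg (hnot k)]
  have h1 : bdry X (ins a (Finsupp.single w 1)) = Finsupp.single w 1 +
      ∑ k ∈ Finset.range w.length, ((-1 : ℤ) ^ (k + 1)) • Finsupp.single (a :: w.eraseIdx k) 1 := by
    rw [ins_single, if_neg ha, bdry_single]
    simp only [List.length_cons]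
    rw [Finset.sum_range_succ']
    simp only [List.eraseIdx_cons_succ, List.eraseIdx_cons_zero, pow_zero, one_smul]
    rw [add_comm]
  rw [h1, h2, add_assoc, ← Finset.sum_add_distrib]
  have h3 : ∀ k ∈ Finset.range w.length,
      ((-1 : ℤ) ^ (k + 1)) • Finsupp.single (a :: w.eraseIdx k) (1 : ℤ) +
        ((-1 : ℤ) ^ k) • Finsupp.single (a :: w.eraseIdx k) (1 : ℤ) = 0 := by
    intro k _
    rw [← add_smul]
    have : (-1 : ℤ) ^ (k + 1) + (-1) ^ k = 0 := by rw [pow_succ]; ring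
    rw [this, zero_smul]
  rw [Finset.sum_congr rfl h3, Finset.sum_const_zero, add_zero]

lemma homotopy_mem (a : X) (w : List X) (hw : w.Nodup) (ha : a ∈ w) :
    bdry X (ins a (Finsupp.single w 1)) + ins a (bdry X (Finsupp.single w 1))
      = ((-1 : ℤ) ^ w.idxOf a) • Finsupp.single (a :: w.erase a) 1 := by
  rw [ins_single, if_pos ha, map_zero, zero_add, bdry_single, map_sum]
  simp only [map_smul, ins_single]
  have hj : w.idxOf a < w.length := List.idxOf_lt_length_iff.2 ha
  rw [Finset.sum_eq_single_of_mem (w.idxOf a) (Finset.mem_range.2 hj)]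
  · rw [← List.erase_eq_eraseIdx_of_idxOf rfl]
    have : ¬ a ∈ w.erase a := fun h => (((List.Nodup.mem_erase_iff hw).1 h).1) rfl
    rw [if_neg this]
  · intro k hk hne
    have hmem : a ∈ w.eraseIdx k := by
      rw [List.mem_eraseIdx_iff_getElem]
      exact ⟨w.idxOf a, hj, Ne.symm hne, List.getElem_idxOf hj⟩
    rw [if_pos hmem, smul_zero]

lemma support_map_subset (F : (List X →₀ ℤ) →ₗ[ℤ] (List X →₀ ℤ)) (c : List X →₀ ℤ) :
    (F c).support ⊆ c.support.biUnion fun w => (F (Finsupp.single w 1)).support := by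
  have hc : F c = ∑ w ∈ c.support, (c w) • F (Finsupp.single w 1) := by
    conv_lhs => rw [← Finsupp.sum_single c]
    rw [Finsupp.sum, map_sum]
    refine Finset.sum_congr rfl fun w _ => ?_
    rw [← map_smul, Finsupp.smul_single, smul_eq_mul, mul_one]
  rw [hc]
  intro x hx
  obtain ⟨w, hw, hxw⟩ := Finset.mem_biUnion.1 (Finsupp.support_finset_sum hx)
  exact Finset.mem_biUnion.2 ⟨w, hw, Finsupp.support_smul hxw⟩

lemma rec_step (m n : ℕ) (hn : n < m) : ∀ (l : List (Fin m)) (c : List (Fin m) →₀ ℤ),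
    bdry (Fin m) c = 0 →
    (∀ w ∈ c.support, w.length = n ∧ w.Nodup ∧ ∀ a : Fin m, a ∉ l → a ∈ w) →
    ∃ b : List (Fin m) →₀ ℤ,
      (∀ w ∈ b.support, w.length = n + 1 ∧ w.Nodup) ∧ bdry (Fin m) b = c := by
  intro l
  induction l with
  | nil =>
    intro c _ hsup
    have hempty : c.support = ∅ := by
      rw [Finset.eq_empty_iff_forall_notMem]
      intro w hw
      obtain ⟨h1, h2, h3⟩ := hsup w hw
      have hsub : (Finset.univ : Finset (Fin m)) ⊆ w.toFinset :=
        fun a _ => List.mem_toFinset.2 (h3 a List.not_mem_nil)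
      have := Finset.card_le_card hsub
      rw [List.toFinset_card_of_nodup h2, h1, Finset.card_univ, Fintype.card_fin] at this
      omega
    refine ⟨0, by simp, ?_⟩
    rw [Finsupp.support_eq_empty.1 hempty, map_zero]
  | cons a l ih =>
    intro c hcyc hsup
    set P : (List (Fin m) →₀ ℤ) →ₗ[ℤ] (List (Fin m) →₀ ℤ) :=
      (bdry (Fin m)).comp (ins a) + (ins a).comp (bdry (Fin m)) with hP
    have hPc : P c = bdry (Fin m) (ins a c) := by
      simp [hP, LinearMap.add_apply, LinearMap.comp_apply, hcyc]
    set F : (List (Fin m) →₀ ℤ) →ₗ[ℤ] (List (Fin m) →₀ ℤ) := LinearMap.id - P with hF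
    set c' := c - P c with hc'
    have hcyc' : bdry (Fin m) c' = 0 := by
      rw [hc', map_sub, hcyc, hPc, bdry_bdry, sub_zero]
    have hc'F : c' = F c := by simp [hc', hF]
    have hsup' : ∀ w ∈ c'.support, w.length = n ∧ w.Nodup ∧ ∀ x : Fin m, x ∉ l → x ∈ w := by
      intro w hw
      rw [hc'F] at hw
      obtain ⟨u, hu, hwu⟩ := Finset.mem_biUnion.1 (support_map_subset F c hw)
      obtain ⟨h1, h2, h3⟩ := hsup u hu
      by_cases hau : a ∈ u
      · have heq : F (Finsupp.single u (1 : ℤ)) =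
            Finsupp.single u 1 - ((-1 : ℤ) ^ u.idxOf a) • Finsupp.single (a :: u.erase a) 1 := by
          rw [hF, LinearMap.sub_apply, LinearMap.id_apply, hP, LinearMap.add_apply,
            LinearMap.comp_apply, LinearMap.comp_apply, homotopy_mem a u h2 hau]
        rw [heq] at hwu
        have hwcases : w = u ∨ w = a :: u.erase a := by
          have := Finsupp.support_sub hwu
          rcases Finset.mem_union.1 this with h | h
          · exact Or.inl (Finset.mem_singleton.1 (Finsupp.support_single_subset h))
          · refine Or.inr (Finset.mem_singleton.1 ?_)
            exact Finsupp.support_single_subset (Finsupp.support_smul h)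
        have hulen : 1 ≤ u.length := List.length_pos_iff.2 (List.ne_nil_of_mem hau)
        rcases hwcases with rfl | rfl
        · refine ⟨h1, h2, fun x hx => ?_⟩
          by_cases hxa : x = a
          · exact hxa ▸ hau
          · exact h3 x (by simp [List.mem_cons, hxa, hx])
        · refine ⟨?_, ?_, ?_⟩
          · simp only [List.length_cons, List.length_erase_of_mem hau, h1]
            omega
          · exact List.Nodup.cons (fun h => ((List.Nodup.mem_erase_iff h2).1 h).1 rfl)
              (List.Nodup.erase a h2)
          · intro x hx
            by_cases hxa : x = a
            · exact hxa ▸ List.mem_cons_self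
            · have hxu : x ∈ u := h3 x (by simp [List.mem_cons, hxa, hx])
              exact List.mem_cons_of_mem _ ((List.mem_erase_of_ne hxa).2 hxu)
      · have heq : F (Finsupp.single u (1 : ℤ)) = 0 := by
          rw [hF, LinearMap.sub_apply, LinearMap.id_apply, hP, LinearMap.add_apply,
            LinearMap.comp_apply, LinearMap.comp_apply, homotopy_notmem a u hau, sub_self]
        rw [heq] at hwu
        simp at hwu
    obtain ⟨b', hb', hdb'⟩ := ih c' hcyc' hsup'
    refine ⟨b' + ins a c, ?_, ?_⟩
    · intro w hw
      rcases Finset.mem_union.1 (Finsupp.support_add hw) with h | h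
      · exact hb' w h
      · obtain ⟨u, hu, hwu⟩ := Finset.mem_biUnion.1 (support_map_subset (ins a) c h)
        obtain ⟨h1, h2, h3⟩ := hsup u hu
        rw [ins_single] at hwu
        by_cases hau : a ∈ u
        · rw [if_pos hau] at hwu; simp at hwu
        · rw [if_neg hau] at hwu
          have := Finset.mem_singleton.1 (Finsupp.support_single_subset hwu)
          subst this
          exact ⟨by simp [h1], List.Nodup.cons hau h2⟩
    · rw [map_add, hdb', ← hPc, hc']
      abel
  
end FarmerAux

/-- Farmer's theorem: the augmented complex of injective words on `{1,…,m}`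
has vanishing homology in every degree `n < m`. -/
theorem farmer_acyclicity (m n : ℕ) (hn : n < m) (c : List (Fin m) →₀ ℤ)
    (hlen : ∀ w ∈ c.support, w.length = n) (hinj : ∀ w ∈ c.support, w.Nodup)
    (hcyc : bdry (Fin m) c = 0) :
    ∃ b : List (Fin m) →₀ ℤ,
      (∀ w ∈ b.support, w.length = n + 1 ∧ w.Nodup) ∧ bdry (Fin m) b = c := by
  exact FarmerAux.rec_step m n hn (List.finRange m) c hcyc
    (fun w hw => ⟨hlen w hw, hinj w hw, fun a ha => absurd (List.mem_finRange a) ha⟩)
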